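/- Let k be a field, n ≥ 2, 1 ≤ e ≤ n-1, d = n-e+1, and let I ⊆ k[x_1,...,x_n] be the ideal generated by all squarefree monomials of degree d, with I_σ = (x_{i_1},...,x_{i_e}) for e-subsets σ. If r, m ∈ ℕ satisfy r·n/e ≥ d·m (i.e., r·n ≥ e·d·m), then ⋂_σ I_σ^{r} ⊆ I^{m}. -/

import Mathlib

open MvPolynomial

private lemma claim_sum {n : ℕ} (e r : ℕ) (a : Fin n → ℕ)
    (h : ∀ σ : Finset (Fin n), σ.card = e → r ≤ ∑ i ∈ σ, a i) :
    ∀ U : Finset (Fin n), e ≤ U.card → U.card * r ≤ e * ∑ i ∈ U, a i := by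
  intro U
  induction U using Finset.strongInduction with
  | _ U ih =>
    intro hU
    rcases eq_or_lt_of_le hU with heq | hlt
    · calc U.card * r = e * r := by rw [heq]
        _ ≤ e * ∑ i ∈ U, a i := Nat.mul_le_mul_left e (h U heq.symm)
    · have hne : U.Nonempty := Finset.card_pos.mp (by omega)
      obtain ⟨j, hj, hjmax⟩ := U.exists_max_image a hne
      have h1 : e ≤ (U.erase j).card := by rw [Finset.card_erase_of_mem hj]; omega
      have h2 := ih (U.erase j) (Finset.erase_ssubset hj) h1
      obtain ⟨σ, hσU, hσ⟩ := Finset.exists_subset_card_eq hU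
      have h3 : r ≤ e * a j := by
        calc r ≤ ∑ i ∈ σ, a i := h σ hσ
          _ ≤ ∑ _i ∈ σ, a j := Finset.sum_le_sum fun i hi => hjmax i (hσU hi)
          _ = e * a j := by rw [Finset.sum_const, hσ, smul_eq_mul]
      have h4 : ∑ i ∈ U.erase j, a i + a j = ∑ i ∈ U, a i :=
        Finset.sum_erase_add U a hj
      have h5 : U.card = (U.erase j).card + 1 := by
        rw [Finset.card_erase_of_mem hj]; omega
      calc U.card * r = (U.erase j).card * r + r := by rw [h5]; ring
        _ ≤ e * ∑ i ∈ U.erase j, a i + e * a j := Nat.add_le_add h2 h3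
        _ = e * ∑ i ∈ U, a i := by rw [← h4]; ring

private lemma lemma1 {n : ℕ} (e d r m : ℕ) (he1 : 1 ≤ e) (hen : e ≤ n) (hd : d = n - e + 1)
    (a : Fin n → ℕ) (h : ∀ σ : Finset (Fin n), σ.card = e → r ≤ ∑ i ∈ σ, a i)
    (hrm : e * d * m ≤ r * n) : d * m ≤ ∑ i, min (a i) m := by
  rcases Nat.eq_zero_or_pos m with hm | hm
  · simp [hm]
  set T := Finset.univ.filter (fun i : Fin n => m ≤ a i) with hT
  have hsplit : ∑ i, min (a i) m = ∑ i ∈ T, min (a i) m + ∑ i ∈ Tᶜ, min (a i) m :=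
    (Finset.sum_add_sum_compl T _).symm
  have hTval : ∑ i ∈ T, min (a i) m = T.card * m := by
    rw [Finset.sum_congr rfl (fun i hi => ?_), Finset.sum_const, smul_eq_mul]
    have := (Finset.mem_filter.mp hi).2
    omega
  have hTcval : ∑ i ∈ Tᶜ, min (a i) m = ∑ i ∈ Tᶜ, a i := by
    refine Finset.sum_congr rfl (fun i hi => ?_)
    have : ¬ (m ≤ a i) := by
      have := Finset.mem_compl.mp hi
      simpa [hT] using this
    omega
  rcases le_or_gt d T.card with hc | hc
  · -- many big coordinates
    calc d * m ≤ T.card * m := Nat.mul_le_mul_right m hc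
      _ ≤ _ := by rw [hsplit, hTval]; omega
  · -- few big coordinates
    have hTcard : T.card ≤ n := by simpa using Finset.card_le_card (Finset.subset_univ T)
    have hTc : Tᶜ.card = n - T.card := by
      rw [Finset.card_compl, Fintype.card_fin]
    have heTc : e ≤ Tᶜ.card := by omega
    have hclaim := claim_sum e r a h Tᶜ heTc
    -- r ≤ e * m
    obtain ⟨σ, hσTc, hσ⟩ := Finset.exists_subset_card_eq heTc
    have hrem : r ≤ e * m := by
      calc r ≤ ∑ i ∈ σ, a i := h σ hσ
        _ ≤ ∑ _i ∈ σ, (m-1) := Finset.sum_le_sum (fun i hi => by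
            have hmem := hσTc hi
            have : ¬ (m ≤ a i) := by simpa [hT] using Finset.mem_compl.mp hmem
            omega)
        _ = e * (m-1) := by rw [Finset.sum_const, hσ, smul_eq_mul]
        _ ≤ e * m := Nat.mul_le_mul_left e (by omega)
    -- main chain
    have key : e * (d * m) ≤ e * ∑ i, min (a i) m := by
      have ht : T.card * r + Tᶜ.card * r = n * r := by
        have : T.card + Tᶜ.card = n := by omega
        calc T.card * r + Tᶜ.card * r = (T.card + Tᶜ.card) * r := by ring
          _ = n * r := by rw [this]
      calc e * (d * m) = e * d * m := by ring
        _ ≤ r * n := hrm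
        _ = T.card * r + Tᶜ.card * r := by rw [ht]; ring
        _ ≤ T.card * (e * m) + e * ∑ i ∈ Tᶜ, a i :=
            Nat.add_le_add (Nat.mul_le_mul_left _ hrem) hclaim
        _ = e * (T.card * m + ∑ i ∈ Tᶜ, a i) := by ring
        _ = e * ∑ i, min (a i) m := by rw [hsplit, hTval, hTcval]
    exact Nat.le_of_mul_le_mul_left key he1


private lemma ind_apply {n : ℕ} (S : Finset (Fin n)) (j : Fin n) :
    (∑ i ∈ S, Finsupp.single i (1:ℕ)) j = if j ∈ S then 1 else 0 := by
  rw [Finset.sum_apply']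
  simp [Finsupp.single_apply]

private lemma prodX {k : Type*} [Field k] {n : ℕ} (S : Finset (Fin n)) :
    (∏ j ∈ S, X j : MvPolynomial (Fin n) k) = monomial (∑ i ∈ S, Finsupp.single i 1) 1 := by
  induction S using Finset.induction_on with
  | empty => simp
  | insert _ _ h ih =>
    rw [Finset.prod_insert h, Finset.sum_insert h, ih, X, monomial_mul, one_mul]

private lemma lemma2 {k : Type*} [Field k] {n : ℕ} (d : ℕ) (hd : 1 ≤ d)
    (I : Ideal (MvPolynomial (Fin n) k))
    (hI : I = Ideal.span {p | ∃ s : Finset (Fin n), s.card = d ∧ p = ∏ j ∈ s, X j}) :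
    ∀ m : ℕ, ∀ a : Fin n →₀ ℕ, ∀ c : k,
      d * m ≤ ∑ i, min (a i) m → monomial a c ∈ I ^ m := by
  intro m
  induction m with
  | zero => intro a c _; simp
  | succ m ih =>
    intro a c hsum
    -- the support has at least d elements
    have hsupp : d ≤ a.support.card := by
      have h1 : ∑ i, min (a i) (m+1) = ∑ i ∈ a.support, min (a i) (m+1) :=
        (Finset.sum_subset (Finset.subset_univ _) (fun i _ hi => by
          simp [Finsupp.notMem_support_iff.mp hi])).symm
      have h2 : ∑ i ∈ a.support, min (a i) (m+1) ≤ a.support.card * (m+1) := by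
        calc ∑ i ∈ a.support, min (a i) (m+1) ≤ ∑ _i ∈ a.support, (m+1) :=
              Finset.sum_le_sum (fun i _ => min_le_right _ _)
          _ = a.support.card * (m+1) := by rw [Finset.sum_const, smul_eq_mul]
      have h0 := hsum
      rw [h1] at h0
      have h3 : d * (m+1) ≤ a.support.card * (m+1) := le_trans h0 h2
      exact Nat.le_of_mul_le_mul_right h3 (Nat.succ_pos m)
    set T := Finset.univ.filter (fun i : Fin n => m + 1 ≤ a i) with hT
    have hTsupp : T ⊆ a.support := by
      intro i hi
      have := (Finset.mem_filter.mp hi).2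
      exact Finsupp.mem_support_iff.mpr (by omega)
    -- choose S ⊆ support, card d, appropriately
    obtain ⟨S, hSsupp, hScard, hkey⟩ :
        ∃ S : Finset (Fin n), S ⊆ a.support ∧ S.card = d ∧
          d * m ≤ ∑ i, min ((a - ∑ j ∈ S, Finsupp.single j (1:ℕ)) i) m := by
      rcases le_or_gt d T.card with hc | hc
      · obtain ⟨S, hST, hS⟩ := Finset.exists_subset_card_eq hc
        refine ⟨S, hST.trans hTsupp, hS, ?_⟩
        have heq : ∀ i ∈ S, min ((a - ∑ j ∈ S, Finsupp.single j (1:ℕ)) i) m = m := by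
          intro i hi
          have h1 : m + 1 ≤ a i := (Finset.mem_filter.mp (hST hi)).2
          rw [Finsupp.tsub_apply, ind_apply, if_pos hi]
          omega
        calc d * m = ∑ _i ∈ S, m := by rw [Finset.sum_const, hS, smul_eq_mul]
          _ = ∑ i ∈ S, min ((a - ∑ j ∈ S, Finsupp.single j (1:ℕ)) i) m :=
              (Finset.sum_congr rfl heq).symm
          _ ≤ _ := Finset.sum_le_sum_of_subset (Finset.subset_univ S)
      · obtain ⟨S, hTS, hSsupp, hS⟩ :=
          Finset.exists_subsuperset_card_eq hTsupp (le_of_lt hc) hsupp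
        refine ⟨S, hSsupp, hS, ?_⟩
        have hSle : ∑ i ∈ S, min (a i) (m+1) ≤
            ∑ i ∈ S, (min ((a - ∑ j ∈ S, Finsupp.single j (1:ℕ)) i) m + 1) := by
          refine Finset.sum_le_sum (fun i hi => ?_)
          rw [Finsupp.tsub_apply, ind_apply, if_pos hi]
          omega
        have hScle : ∑ i ∈ Sᶜ, min (a i) (m+1) =
            ∑ i ∈ Sᶜ, min ((a - ∑ j ∈ S, Finsupp.single j (1:ℕ)) i) m := by
          refine Finset.sum_congr rfl (fun i hi => ?_)
          have hiS : i ∉ S := Finset.mem_compl.mp hi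
          have hiT : i ∉ T := fun hmem => hiS (hTS hmem)
          have hsmall : ¬ (m + 1 ≤ a i) := by simpa [hT] using hiT
          rw [Finsupp.tsub_apply, ind_apply, if_neg hiS]
          omega
        have htot : d * (m+1) ≤ ∑ i, min ((a - ∑ j ∈ S, Finsupp.single j (1:ℕ)) i) m + d := by
          calc d * (m+1) ≤ ∑ i, min (a i) (m+1) := hsum
            _ = ∑ i ∈ S, min (a i) (m+1) + ∑ i ∈ Sᶜ, min (a i) (m+1) :=
                (Finset.sum_add_sum_compl S _).symm
            _ ≤ (∑ i ∈ S, (min ((a - ∑ j ∈ S, Finsupp.single j (1:ℕ)) i) m + 1))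
                + ∑ i ∈ Sᶜ, min ((a - ∑ j ∈ S, Finsupp.single j (1:ℕ)) i) m := by
                rw [← hScle]; exact Nat.add_le_add_right hSle _
            _ = (∑ i ∈ S, min ((a - ∑ j ∈ S, Finsupp.single j (1:ℕ)) i) m + d)
                + ∑ i ∈ Sᶜ, min ((a - ∑ j ∈ S, Finsupp.single j (1:ℕ)) i) m := by
                rw [Finset.sum_add_distrib, Finset.sum_const, hS, smul_eq_mul, mul_one]
            _ = ∑ i, min ((a - ∑ j ∈ S, Finsupp.single j (1:ℕ)) i) m + d := by
                rw [add_right_comm, Finset.sum_add_sum_compl S]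
        rw [Nat.mul_succ] at htot; omega
    -- now decompose the monomial
    set indS : Fin n →₀ ℕ := ∑ j ∈ S, Finsupp.single j (1:ℕ) with hind
    have hle : indS ≤ a := by
      rw [Finsupp.le_def]
      intro i
      rw [hind, ind_apply]
      split
      · next hi => exact Nat.one_le_iff_ne_zero.mpr (Finsupp.mem_support_iff.mp (hSsupp hi))
      · exact Nat.zero_le _
    have hdecomp : monomial a c = (∏ j ∈ S, X j) * monomial (a - indS) c := by
      rw [prodX, monomial_mul, one_mul, ← hind, add_tsub_cancel_of_le hle]
    rw [hdecomp, pow_succ']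
    refine Ideal.mul_mem_mul ?_ (ih _ c hkey)
    rw [hI]
    exact Ideal.subset_span ⟨S, hScard, rfl⟩


private lemma lemmaB {k : Type*} [Field k] {n : ℕ} (σ : Finset (Fin n)) (r : ℕ) :
    (Ideal.span (X '' (σ : Set (Fin n))) : Ideal (MvPolynomial (Fin n) k)) ^ r ≤
    Ideal.span ((fun s => monomial s (1:k)) ''
      {a : Fin n →₀ ℕ | r ≤ ∑ i ∈ σ, a i}) := by
  induction r with
  | zero =>
    rw [pow_zero]
    have h1 : (1 : MvPolynomial (Fin n) k) ∈ Ideal.span ((fun s => monomial s (1:k)) ''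
        {a : Fin n →₀ ℕ | 0 ≤ ∑ i ∈ σ, a i}) :=
      Ideal.subset_span ⟨0, by simp, by simp⟩
    exact fun x _ => (Ideal.eq_top_iff_one _).mpr h1 ▸ Submodule.mem_top
  | succ r ih =>
    rw [pow_succ]
    calc _ ≤ Ideal.span ((fun s => monomial s (1:k)) '' {a : Fin n →₀ ℕ | r ≤ ∑ i ∈ σ, a i})
          * Ideal.span (X '' (σ : Set (Fin n))) := Ideal.mul_mono_left ih
      _ ≤ _ := by
        rw [Ideal.span_mul_span, Ideal.span_le]
        intro x hx
        simp only [Set.mem_mul] at hx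
        obtain ⟨f, hf, g, hg, rfl⟩ := hx
        obtain ⟨sa, hsa, rfl⟩ := hf
        obtain ⟨i, hi, rfl⟩ := hg
        refine Ideal.subset_span ⟨sa + Finsupp.single i 1, ?_, ?_⟩
        · have : ∑ j ∈ σ, (Finsupp.single i (1:ℕ)) j = 1 := by
            rw [Finset.sum_congr rfl (fun j _ => Finsupp.single_apply),
              Finset.sum_ite_eq σ i (fun _ => 1), if_pos (Finset.mem_coe.mp hi)]
          simp only [Set.mem_setOf_eq, Finsupp.add_apply, Finset.sum_add_distrib, this]
          exact Nat.add_le_add hsa le_rfl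
        · rw [X, monomial_mul, mul_one]

/-- if `r·n ≥ e·d·m` then `⋂_σ I_σ^r ⊆ I^m`, where `I` is generated by
the squarefree monomials of degree `d = n-e+1` and `σ` ranges over `e`-subsets. -/
theorem stmt_13 (k : Type*) [Field k] (n e : ℕ) (hn : 2 ≤ n) (he1 : 1 ≤ e) (he2 : e ≤ n - 1)
    (d : ℕ) (hd : d = n - e + 1)
    (I : Ideal (MvPolynomial (Fin n) k))
    (hI : I = Ideal.span {p | ∃ s : Finset (Fin n), s.card = d ∧ p = ∏ j ∈ s, X j})
    (r m : ℕ) (hrm : e * d * m ≤ r * n) :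
    (⨅ σ ∈ {s : Finset (Fin n) | s.card = e},
        (Ideal.span (X '' (σ : Set (Fin n))) : Ideal (MvPolynomial (Fin n) k)) ^ r)
      ≤ I ^ m := by
  intro p hp
  simp only [Ideal.mem_iInf, Set.mem_setOf_eq] at hp
  rw [p.as_sum]
  refine Ideal.sum_mem _ (fun v hv => ?_)
  refine lemma2 d (by omega) I hI m v _ ?_
  refine lemma1 e d r m he1 (by omega) hd v ?_ hrm
  intro σ hσ
  have hmem := lemmaB σ r (hp σ hσ)
  rw [mem_ideal_span_monomial_image] at hmem
  obtain ⟨si, hsi, hle⟩ := hmem v hv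
  calc r ≤ ∑ i ∈ σ, si i := hsi
    _ ≤ ∑ i ∈ σ, v i := Finset.sum_le_sum (fun i _ => Finsupp.le_def.mp hle i)
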